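/- Let k ≥ 2 and let G be a simple graph such that the constant term a₀ of the characteristic polynomial of Q(G) equals ±2. Then for every t ≥ 1, the constant term of the characteristic polynomial of Q(G∘P_k^t) also equals ±2 (i.e., is 2 or −2). -/

import Mathlib

open Matrix Polynomial BigOperators

/-- The signless Laplacian matrix `Q(G) = D(G) + A(G)` of a simple graph. -/
noncomputable def qMat (R : Type) [Ring R] {V : Type} [Fintype V] [DecidableEq V]
    (G : SimpleGraph V) : Matrix V V R :=
  letI := Classical.decRel G.Adj
  G.degMatrix R + G.adjMatrix R

/-- The determinant of the Q-walk matrix `[e, Qe, …, Q^{m-1}e]` of a graph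
(rows indexed by vertices via a fixed enumeration; well defined up to sign). -/
noncomputable def qWalkDet {V : Type} [Fintype V] [DecidableEq V] (G : SimpleGraph V) : ℝ :=
  Matrix.det (Matrix.of fun i j : Fin (Fintype.card V) =>
    ((qMat ℝ G ^ (j : ℕ)) *ᵥ (fun _ => (1 : ℝ))) ((Fintype.equivFin V).symm i))

/-- The rooted product `G ∘ P_k`: a pendant path on `k-1` extra vertices attached
at each vertex of `G`; level `0` is the copy of `G`. -/
def rootedProd {V : Type} (G : SimpleGraph V) (k : ℕ) : SimpleGraph (V × Fin k) :=
  SimpleGraph.fromRel (fun a b =>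
    (a.2 = b.2 ∧ (a.2 : ℕ) = 0 ∧ G.Adj a.1 b.1) ∨ (a.1 = b.1 ∧ (a.2 : ℕ) + 1 = (b.2 : ℕ)))

/-- A graph is determined by its generalized Q-spectrum. -/
def IsDGQS {V : Type} [Fintype V] [DecidableEq V] (G : SimpleGraph V) : Prop :=
  ∀ H : SimpleGraph V,
    (qMat ℝ H).charpoly = (qMat ℝ G).charpoly →
    (qMat ℝ Hᶜ).charpoly = (qMat ℝ Gᶜ).charpoly →
    Nonempty (H ≃g G)


/-- Vertex type of the iterated rooted product `G ∘ P_k^t`. -/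
def iterVertex (V : Type) (k : ℕ) : ℕ → Type
  | 0 => V
  | (t + 1) => iterVertex V k t × Fin k

instance iterVertexFintype (V : Type) [Fintype V] (k : ℕ) :
    ∀ t, Fintype (iterVertex V k t)
  | 0 => inferInstanceAs (Fintype V)
  | (t + 1) => @instFintypeProd _ _ (iterVertexFintype V k t) inferInstance

instance iterVertexDecEq (V : Type) [DecidableEq V] (k : ℕ) :
    ∀ t, DecidableEq (iterVertex V k t)
  | 0 => inferInstanceAs (DecidableEq V)
  | (t + 1) => @instDecidableEqProd _ _ (iterVertexDecEq V k t) inferInstance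

/-- The iterated rooted product `G ∘ P_k^t`: `G ∘ P_k^0 = G` and
`G ∘ P_k^t = (G ∘ P_k^{t-1}) ∘ P_k`. -/
def iterRootedProd {V : Type} (G : SimpleGraph V) (k : ℕ) :
    ∀ t, SimpleGraph (iterVertex V k t)
  | 0 => G
  | (t + 1) => rootedProd (iterRootedProd G k t) k

open scoped Classical in
lemma qMat_apply' {W : Type} [Fintype W] [DecidableEq W] (G : SimpleGraph W) (a b : W) :
    qMat ℝ G a b = (if a = b then ∑ x : W, (if G.Adj a x then (1:ℝ) else 0) else 0) +
      (if G.Adj a b then 1 else 0) := by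
  classical
  have hdeg : (G.degree a : ℝ) = ∑ x : W, (if G.Adj a x then (1:ℝ) else 0) := by
    rw [SimpleGraph.degree, SimpleGraph.neighborFinset_eq_filter, Finset.card_filter]
    push_cast
    refine Finset.sum_congr rfl fun x _ => by split_ifs <;> simp_all
  simp only [qMat, Matrix.add_apply, SimpleGraph.degMatrix, Matrix.diagonal_apply,
    SimpleGraph.adjMatrix_apply, ← hdeg]


lemma rp_adj {W : Type} (G : SimpleGraph W) (k : ℕ) (a b : W × Fin k) :
    (rootedProd G k).Adj a b ↔
      ((a.2 : ℕ) = (b.2 : ℕ) ∧ (a.2 : ℕ) = 0 ∧ G.Adj a.1 b.1) ∨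
      (a.1 = b.1 ∧ ((a.2 : ℕ) + 1 = (b.2 : ℕ) ∨ (b.2 : ℕ) + 1 = (a.2 : ℕ))) := by
  obtain ⟨u, s⟩ := a; obtain ⟨v, r⟩ := b
  rw [rootedProd, SimpleGraph.fromRel_adj]
  simp only [Prod.mk.injEq, ne_eq, not_and, Fin.ext_iff]
  constructor
  · rintro ⟨hne, (⟨h1, h2, h3⟩ | ⟨h1, h2⟩) | (⟨h1, h2, h3⟩ | ⟨h1, h2⟩)⟩
    · exact Or.inl ⟨h1, h2, h3⟩
    · exact Or.inr ⟨h1, Or.inl h2⟩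
    · exact Or.inl ⟨by omega, by omega, h3.symm⟩
    · exact Or.inr ⟨h1.symm, Or.inr h2⟩
  · rintro (⟨h1, h2, h3⟩ | ⟨h1, (h2 | h2)⟩)
    · exact ⟨fun hu => absurd hu (G.ne_of_adj h3), Or.inl (Or.inl ⟨h1, h2, h3⟩)⟩
    · exact ⟨fun _ h => by omega, Or.inl (Or.inr ⟨h1, h2⟩)⟩
    · exact ⟨fun _ h => by omega, Or.inr (Or.inr ⟨h1.symm, h2⟩)⟩

noncomputable def rpU {W : Type} [DecidableEq W] (k : ℕ) : Matrix (W × Fin k) (W × Fin k) ℝ :=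
  fun a b => if a.1 = b.1 ∧ ((a.2 : ℕ) = (b.2 : ℕ) ∨ (a.2 : ℕ) + 1 = (b.2 : ℕ)) then 1 else 0

noncomputable def rpL {W : Type} [Fintype W] [DecidableEq W] (G : SimpleGraph W) (k : ℕ) :
    Matrix (W × Fin k) (W × Fin k) ℝ :=
  fun a b =>
    if (a.2 : ℕ) = 0 ∧ (b.2 : ℕ) = 0 then qMat ℝ G a.1 b.1
    else if a.1 = b.1 ∧ ((a.2 : ℕ) = (b.2 : ℕ) ∨ (b.2 : ℕ) + 1 = (a.2 : ℕ)) then 1 else 0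

lemma sum_fin_ite {k : ℕ} (m : ℕ) (f : Fin k → ℝ) :
    (∑ t : Fin k, if m = (t : ℕ) then f t else 0) =
      if h : m < k then f ⟨m, h⟩ else 0 := by
  split_ifs with h
  · rw [Finset.sum_eq_single ⟨m, h⟩]
    · simp
    · intro t _ ht
      rw [if_neg]
      intro hmt
      exact ht (Fin.ext hmt.symm)
    · simp
  · refine Finset.sum_eq_zero fun t _ => ?_
    rw [if_neg]
    intro hmt
    have := t.isLt
    omega

open scoped Classical in
lemma rp_degsum {W : Type} [Fintype W] [DecidableEq W] (G : SimpleGraph W) (k : ℕ)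
    (hk : 2 ≤ k) (u : W) (s : Fin k) :
    (∑ x : W × Fin k, if (rootedProd G k).Adj (u, s) x then (1:ℝ) else 0) =
      (if (s : ℕ) = 0 then (∑ x : W, if G.Adj u x then (1:ℝ) else 0) + 1
        else if (s : ℕ) + 1 < k then 2 else 1) := by
  have key : ∀ x : W × Fin k, (if (rootedProd G k).Adj (u, s) x then (1:ℝ) else 0) =
      (if ((s:ℕ) = (x.2:ℕ) ∧ ((s:ℕ) = 0 ∧ G.Adj u x.1)) then 1 else 0) +
      ((if ((s:ℕ) + 1 = (x.2:ℕ) ∧ u = x.1) then 1 else 0) +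
       (if ((x.2:ℕ) + 1 = (s:ℕ) ∧ u = x.1) then 1 else 0)) := by
    intro x
    rw [rp_adj]
    by_cases a : (s:ℕ) = (x.2:ℕ) <;> by_cases b : (s:ℕ) = 0 <;>
      by_cases c : G.Adj u x.1 <;> by_cases d : u = x.1 <;>
      by_cases e : (s:ℕ) + 1 = (x.2:ℕ) <;> by_cases f : (x.2:ℕ) + 1 = (s:ℕ) <;>
      first
        | (exfalso; omega)
        | simp [a, b, c, d, e, f]
  rw [Finset.sum_congr rfl fun x _ => key x, Finset.sum_add_distrib, Finset.sum_add_distrib]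
  have S1 : (∑ x : W × Fin k,
      if ((s:ℕ) = (x.2:ℕ) ∧ ((s:ℕ) = 0 ∧ G.Adj u x.1)) then (1:ℝ) else 0)
      = if (s:ℕ) = 0 then (∑ x : W, if G.Adj u x then (1:ℝ) else 0) else 0 := by
    rw [Fintype.sum_prod_type_right]
    dsimp only
    simp only [ite_and, Finset.sum_ite_irrel, Finset.sum_const_zero]
    rw [sum_fin_ite (k := k) (s:ℕ)
      (fun t => if (s:ℕ) = 0 then (∑ w : W, if G.Adj u w then (1:ℝ) else 0) else 0)]
    rw [dif_pos s.isLt]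
  have S2 : (∑ x : W × Fin k, if ((s:ℕ) + 1 = (x.2:ℕ) ∧ u = x.1) then (1:ℝ) else 0)
      = if (s:ℕ) + 1 < k then 1 else 0 := by
    rw [Fintype.sum_prod_type_right]
    dsimp +instances only
    simp only [ite_and, Finset.sum_ite_irrel, Finset.sum_ite_eq, Finset.mem_univ, if_true,
      Finset.sum_const_zero]
    rw [sum_fin_ite (k := k) ((s:ℕ)+1) (fun t => (1:ℝ))]
    split_ifs <;> rfl
  have S3 : (∑ x : W × Fin k, if ((x.2:ℕ) + 1 = (s:ℕ) ∧ u = x.1) then (1:ℝ) else 0)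
      = if 1 ≤ (s:ℕ) then 1 else 0 := by
    rw [Fintype.sum_prod_type_right]
    dsimp +instances only
    simp only [ite_and, Finset.sum_ite_irrel, Finset.sum_ite_eq, Finset.mem_univ, if_true,
      Finset.sum_const_zero]
    by_cases hs1 : 1 ≤ (s:ℕ)
    · have hcg : (∑ t : Fin k, if (t:ℕ) + 1 = (s:ℕ) then (1:ℝ) else 0)
          = ∑ t : Fin k, if (s:ℕ) - 1 = (t:ℕ) then (1:ℝ) else 0 :=
        Finset.sum_congr rfl fun t _ => if_congr (by omega) rfl rfl
      have hsk := s.isLt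
      rw [hcg, sum_fin_ite (k := k) ((s:ℕ)-1) (fun t => (1:ℝ)),
        dif_pos (by omega : (s:ℕ)-1 < k), if_pos hs1]
    · rw [if_neg hs1]
      refine Finset.sum_eq_zero fun t _ => if_neg (by omega)
  rw [S1, S2, S3]
  have hsk := s.isLt
  split_ifs <;> first | omega | ring1 | (exfalso; omega)

open scoped Classical in
lemma rp_factor {W : Type} [Fintype W] [DecidableEq W] (G : SimpleGraph W) (k : ℕ)
    (hk : 2 ≤ k) :
    qMat ℝ (rootedProd G k) = rpU k * rpL G k := by
  ext ⟨u, s⟩ ⟨v, r⟩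
  have hR : (rpU (W := W) k * rpL G k) (u, s) (v, r) =
      rpL G k (u, s) (v, r) +
        (if h : (s:ℕ) + 1 < k then rpL G k (u, ⟨(s:ℕ)+1, h⟩) (v, r) else 0) := by
    rw [Matrix.mul_apply, Fintype.sum_prod_type_right]
    dsimp only [rpU]
    simp only [ite_and, ite_mul, boole_mul, zero_mul, one_mul, Finset.sum_ite_irrel, Finset.sum_ite_eq,
      Finset.mem_univ, if_true, Finset.sum_const_zero]
    have hsplit : ∀ t : Fin k,
        (if ((s:ℕ) = (t:ℕ) ∨ (s:ℕ) + 1 = (t:ℕ)) then rpL G k (u, t) (v, r) else 0) =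
          (if (s:ℕ) = (t:ℕ) then rpL G k (u, t) (v, r) else 0) +
          (if (s:ℕ) + 1 = (t:ℕ) then rpL G k (u, t) (v, r) else 0) := by
      intro t
      by_cases h1 : (s:ℕ) = (t:ℕ) <;> by_cases h2 : (s:ℕ) + 1 = (t:ℕ) <;>
        first | (exfalso; omega) | simp [h1, h2]
    rw [Finset.sum_congr rfl fun t _ => hsplit t, Finset.sum_add_distrib,
      sum_fin_ite (k := k) (s:ℕ) (fun t => rpL G k (u, t) (v, r)),
      sum_fin_ite (k := k) ((s:ℕ)+1) (fun t => rpL G k (u, t) (v, r)),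
      dif_pos s.isLt]
  rw [hR, qMat_apply', rp_degsum G k hk u s]
  have hsk := s.isLt
  have hrk := r.isLt
  by_cases hu : u = v <;> by_cases hadj : G.Adj u v <;>
    by_cases hs0 : (s:ℕ) = 0 <;> by_cases hr0 : (r:ℕ) = 0 <;>
    by_cases hsr : (s:ℕ) = (r:ℕ) <;> by_cases h1 : (s:ℕ) + 1 < k <;>
    by_cases hsr2 : (s:ℕ) + 1 = (r:ℕ) <;> by_cases hrs2 : (r:ℕ) + 1 = (s:ℕ) <;>
    first
      | (exfalso; omega)
      | (exfalso; exact G.loopless v (hu ▸ hadj))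
      | (simp [rpL, rp_adj, Prod.ext_iff, Fin.ext_iff, hu, hadj, hs0, hr0, hsr, h1, hsr2,
          hrs2, qMat_apply', G.adj_comm u v]
         <;> try first | rfl | ring1 | omega | (exfalso; omega))
      | skip
  all_goals
    first
      | omega
      | (exfalso; omega)
      | (split_ifs <;> first | rfl | ring1 | omega | (exfalso; omega))

lemma det_rpU {W : Type} [Fintype W] [DecidableEq W] (k : ℕ) :
    (rpU (W := W) k).det = 1 := by
  have hbt : (rpU (W := W) k).BlockTriangular (fun a => a.2) := by
    intro i j hij
    have hij' : (j.2 : ℕ) < (i.2 : ℕ) := hij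
    simp only [rpU]
    rw [if_neg]
    rintro ⟨-, h | h⟩ <;> omega
  rw [hbt.det_fintype]
  refine Finset.prod_eq_one fun m _ => ?_
  have hb : (rpU (W := W) k).toSquareBlock (fun a => a.2) m = 1 := by
    ext ⟨⟨u, t⟩, ht⟩ ⟨⟨v, t'⟩, ht'⟩
    simp only [Matrix.toSquareBlock_def, rpU, Matrix.one_apply, Subtype.mk.injEq,
      Prod.mk.injEq]
    change t = m at ht
    change t' = m at ht'
    subst ht; subst ht'
    by_cases huv : u = v <;> simp [huv]
  rw [hb, Matrix.det_one]

lemma det_rpL {W : Type} [Fintype W] [DecidableEq W] (G : SimpleGraph W) (k : ℕ)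
    (hk : 2 ≤ k) :
    (rpL G k).det = (qMat ℝ G).det := by
  have hbt : (rpL G k).BlockTriangular (fun a => OrderDual.toDual a.2) := by
    intro i j hij
    have hij2 : (i.2 : ℕ) < (j.2 : ℕ) := hij
    simp only [rpL]
    rw [if_neg, if_neg]
    · rintro ⟨-, h | h⟩ <;> omega
    · rintro ⟨h1, h2⟩; omega
  rw [hbt.det_fintype]
  have hblock : ∀ m : (Fin k)ᵒᵈ,
      ((rpL G k).toSquareBlock (fun a => OrderDual.toDual a.2) m).det =
        if ((OrderDual.ofDual m : Fin k) : ℕ) = 0 then (qMat ℝ G).det else 1 := by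
    intro m
    let e : W ≃ {a : W × Fin k // OrderDual.toDual a.2 = m} :=
      { toFun := fun u => ⟨(u, OrderDual.ofDual m), rfl⟩
        invFun := fun x => x.1.1
        left_inv := fun u => rfl
        right_inv := fun x => by
          obtain ⟨⟨w, t'⟩, h⟩ := x
          have ht' : t' = OrderDual.ofDual m := h
          subst ht'
          rfl }
    rw [← Matrix.det_submatrix_equiv_self e]
    by_cases ht0 : ((OrderDual.ofDual m : Fin k) : ℕ) = 0
    · rw [if_pos ht0]
      congr 1
      ext u v
      show rpL G k (u, OrderDual.ofDual m) (v, OrderDual.ofDual m) = qMat ℝ G u v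
      simp only [rpL]
      rw [if_pos ⟨ht0, ht0⟩]
    · rw [if_neg ht0]
      have h1 : ((rpL G k).toSquareBlock (fun a => OrderDual.toDual a.2) m).submatrix e e
          = 1 := by
        ext u v
        show rpL G k (u, OrderDual.ofDual m) (v, OrderDual.ofDual m) = (1 : Matrix W W ℝ) u v
        simp only [rpL, Matrix.one_apply]
        rw [if_neg (fun h => ht0 h.1)]
        by_cases huv : u = v <;> simp [huv]
      rw [h1, Matrix.det_one]
  rw [Finset.prod_congr rfl fun m _ => hblock m]
  refine (Finset.prod_eq_single (OrderDual.toDual (⟨0, by omega⟩ : Fin k)) ?_ ?_).trans ?_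
  · intro m _ hm
    exact if_neg (fun h0 => hm (congrArg OrderDual.toDual (Fin.ext h0)))
  · intro h
    exact absurd (Finset.mem_univ _) h
  · simp

lemma det_rp {W : Type} [Fintype W] [DecidableEq W] (G : SimpleGraph W) (k : ℕ)
    (hk : 2 ≤ k) :
    (qMat ℝ (rootedProd G k)).det = (qMat ℝ G).det := by
  rw [rp_factor G k hk, Matrix.det_mul, det_rpU, det_rpL G k hk, one_mul]

/-- If the constant term of the characteristic polynomial of `Q(G)`
is `±2`, then for every `t ≥ 1` the constant term of the characteristic polynomial of
`Q(G∘P_k^t)` is also `±2`. -/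
theorem iterRootedProd_const_term (n k : ℕ) (hk : 2 ≤ k) (G : SimpleGraph (Fin n))
    (ha : (qMat ℝ G).charpoly.coeff 0 = 2 ∨ (qMat ℝ G).charpoly.coeff 0 = -2) :
    ∀ t, 1 ≤ t →
      (qMat ℝ (iterRootedProd G k t)).charpoly.coeff 0 = 2 ∨
      (qMat ℝ (iterRootedProd G k t)).charpoly.coeff 0 = -2 := by
  have hdetG : (qMat ℝ G).det = 2 ∨ (qMat ℝ G).det = -2 := by
    rcases neg_one_pow_eq_or ℝ (Fintype.card (Fin n)) with hc | hc <;>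
      rcases ha with h | h <;>
      rw [Matrix.det_eq_sign_charpoly_coeff, hc, h] <;> norm_num
  have hdet : ∀ t, (qMat ℝ (iterRootedProd G k t)).det = (qMat ℝ G).det := by
    intro t
    induction t with
    | zero => rfl
    | succ t ih =>
      calc (qMat ℝ (iterRootedProd G k (t+1))).det
          = (qMat ℝ (iterRootedProd G k t)).det := det_rp _ k hk
        _ = _ := ih
  intro t _
  have h1 := Matrix.det_eq_sign_charpoly_coeff (qMat ℝ (iterRootedProd G k t))
  rw [hdet t] at h1
  rcases neg_one_pow_eq_or ℝ (Fintype.card (iterVertex (Fin n) k t)) with hc | hc <;>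
    rw [hc] at h1 <;> rcases hdetG with h | h <;> rw [h] at h1 <;>
    [left; right; right; left] <;> linarith
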